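/- Let β ∈ ℝⁿ, α², ν, t₀ > 0, 0 < μ < 1, z(ξ) = α²‖ξ‖² + i(β·ξ) + ν, Λ(ξ) = z(ξ)/(1 - e^{-z(ξ)t₀}), and R³_μ(ξ) = Λ(ξ)/e^{μ²‖ξ‖²/4}. Then for all ξ ∈ ℝⁿ, |R³_μ(ξ)| < M₃/μ² where M₃ = max{(α² + ν)(8 + 4√n‖β‖_∞/√(α²ν)), 8/t₀ + 4√n‖β‖_∞/(t₀√(α²ν))}. -/

import Mathlib

set_option maxHeartbeats 1000000


theorem R17_bound {n : ℕ} (β : EuclideanSpace ℝ (Fin n))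
    (α2 ν t0 μ : ℝ) (hα : 0 < α2) (hν : 0 < ν) (ht : 0 < t0)
    (hμ0 : 0 < μ) (hμ1 : μ < 1) :
    ∀ ξ : EuclideanSpace ℝ (Fin n),
      ‖
        (((((α2 * ‖ξ‖ ^ 2 + ν : ℝ) : ℂ) + (inner ℝ β ξ : ℝ) * Complex.I) /
            (1 - Complex.exp
              (-((((α2 * ‖ξ‖ ^ 2 + ν : ℝ) : ℂ) + (inner ℝ β ξ : ℝ) * Complex.I) * t0)))) /
          ((Real.exp (μ ^ 2 * ‖ξ‖ ^ 2 / 4) : ℝ) : ℂ))‖ <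
        (max ((α2 + ν) * (8 + 4 * Real.sqrt n * (⨆ i, |β i|) / Real.sqrt (α2 * ν))) (8 / t0 + 4 * Real.sqrt n * (⨆ i, |β i|) / (t0 * Real.sqrt (α2 * ν)))) / μ ^ 2 := by
  intro ξ
  set S : ℝ := ⨆ i, |β i| with hSdef
  have hS0 : 0 ≤ S := Real.iSup_nonneg fun i => abs_nonneg _
  set a : ℝ := α2 * ‖ξ‖ ^ 2 + ν with hadef
  have ha0 : 0 < a := by positivity
  set b : ℝ := inner ℝ β ξ with hbdef
  set z : ℂ := ((a : ℝ) : ℂ) + ((b : ℝ) : ℂ) * Complex.I with hzdef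
  have hsq : 0 < Real.sqrt (α2 * ν) := Real.sqrt_pos.2 (by positivity)
  set c : ℝ := Real.sqrt n * S / (2 * Real.sqrt (α2 * ν)) with hcdef
  have hc0 : 0 ≤ c := by positivity
  set M : ℝ := max (α2 + ν) (1 / t0) with hMdef
  have hM0 : 0 < M := lt_of_lt_of_le (by positivity) (le_max_left _ _)
  set E : ℝ := Real.exp (μ ^ 2 * ‖ξ‖ ^ 2 / 4) with hEdef
  have hE0 : 0 < E := Real.exp_pos _
  -- |β| ≤ √n * S
  have hβi : ∀ i, |β i| ≤ S := fun i =>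
    le_ciSup (f := fun i => |β i|) (Set.Finite.bddAbove (Set.finite_range _)) i
  have hβnorm : ‖β‖ ≤ Real.sqrt n * S := by
    rw [EuclideanSpace.norm_eq]
    simp only [Real.norm_eq_abs]
    have h1 : ∑ i, |β i| ^ 2 ≤ (n : ℝ) * S ^ 2 := by
      calc ∑ i, |β i| ^ 2 ≤ ∑ _i : Fin n, S ^ 2 := by
            apply Finset.sum_le_sum
            intro i _
            exact pow_le_pow_left₀ (abs_nonneg _) (hβi i) 2
        _ = (n : ℝ) * S ^ 2 := by simp [mul_comm]
    calc Real.sqrt (∑ i, |β i| ^ 2) ≤ Real.sqrt ((n : ℝ) * S ^ 2) := Real.sqrt_le_sqrt h1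
      _ = Real.sqrt n * S := by
          rw [Real.sqrt_mul (Nat.cast_nonneg n), Real.sqrt_sq hS0]
  -- AM-GM : 2 √(α2 ν) ‖ξ‖ ≤ a
  have hamgm : 2 * Real.sqrt (α2 * ν) * ‖ξ‖ ≤ a := by
    have h1 := sq_nonneg (Real.sqrt α2 * ‖ξ‖ - Real.sqrt ν)
    have h2 : Real.sqrt α2 ^ 2 = α2 := Real.sq_sqrt hα.le
    have h3 : Real.sqrt ν ^ 2 = ν := Real.sq_sqrt hν.le
    have h4 : Real.sqrt (α2 * ν) = Real.sqrt α2 * Real.sqrt ν := Real.sqrt_mul hα.le ν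
    rw [hadef, h4]
    nlinarith [sq_nonneg (‖ξ‖ : ℝ)]
  have hξa : ‖ξ‖ ≤ a / (2 * Real.sqrt (α2 * ν)) := by
    rw [le_div_iff₀ (by positivity)]
    linarith
  -- |b| ≤ a * c
  have hb : |b| ≤ a * c := by
    have h1 : |b| ≤ ‖β‖ * ‖ξ‖ := abs_real_inner_le_norm β ξ
    have h2 : ‖β‖ * ‖ξ‖ ≤ (Real.sqrt n * S) * (a / (2 * Real.sqrt (α2 * ν))) :=
      mul_le_mul hβnorm hξa (norm_nonneg _) (by positivity)
    have h3 : (Real.sqrt n * S) * (a / (2 * Real.sqrt (α2 * ν))) = a * c := by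
      rw [hcdef]; ring
    exact h1.trans (h2.trans h3.le)
  -- |z| ≤ a * (1 + c)
  have hzre : z.re = a := by simp [hzdef]
  have hzim : z.im = b := by simp [hzdef]
  have habsz : ‖z‖ ≤ a * (1 + c) := by
    have h1 : ‖z‖ ≤ |z.re| + |z.im| := Complex.norm_le_abs_re_add_abs_im z
    rw [hzre, hzim, abs_of_pos ha0] at h1
    nlinarith
  -- denominator lower bound
  set d : ℝ := 1 - Real.exp (-(a * t0)) with hddef
  have hd0 : 0 < d := by
    have : Real.exp (-(a * t0)) < 1 := by
      rw [Real.exp_lt_one_iff]; nlinarith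
    linarith
  have hDabs : ‖Complex.exp (-(z * (t0 : ℝ)))‖ = Real.exp (-(a * t0)) := by
    rw [Complex.norm_exp]
    congr 1
    simp [Complex.neg_re, Complex.mul_re, hzre, hzim]
  have hD : d ≤ ‖1 - Complex.exp (-(z * (t0 : ℝ)))‖ := by
    have h1 := norm_sub_norm_le (1 : ℂ) (Complex.exp (-(z * (t0 : ℝ))))
    simp only [norm_one] at h1
    rw [hDabs] at h1
    exact h1
  have hDpos : 0 < ‖1 - Complex.exp (-(z * (t0 : ℝ)))‖ := lt_of_lt_of_le hd0 hD
  -- a / d ≤ 1/t0 + a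
  have h4 : a / d ≤ 1 / t0 + a := by
    have key : (1 + a * t0) * Real.exp (-(a * t0)) ≤ 1 := by
      have h1 : a * t0 + 1 ≤ Real.exp (a * t0) := Real.add_one_le_exp _
      have h2 : Real.exp (-(a * t0)) * Real.exp (a * t0) = 1 := by
        rw [← Real.exp_add]; simp
      nlinarith [Real.exp_pos (-(a * t0))]
    have step : a / d ≤ (1 + a * t0) / t0 := by
      rw [div_le_div_iff₀ hd0 ht, hddef]
      nlinarith
    have heq : (1 + a * t0) / t0 = 1 / t0 + a := by field_simp
    linarith [heq ▸ step]
  -- 1/t0 + a ≤ M * (2 + ‖ξ‖^2)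
  have h5 : 1 / t0 + a ≤ M * (2 + ‖ξ‖ ^ 2) := by
    have hm1 : α2 + ν ≤ M := le_max_left _ _
    have hm2 : 1 / t0 ≤ M := le_max_right _ _
    have hα2M : α2 ≤ M := by linarith
    have hνM : ν ≤ M := by linarith
    have := mul_le_mul_of_nonneg_right hα2M (sq_nonneg ‖ξ‖)
    rw [hadef]; nlinarith
  -- (2 + ‖ξ‖^2) / E < 8 / μ^2
  have h6 : (2 + ‖ξ‖ ^ 2) / E < 8 / μ ^ 2 := by
    have hE2 : 1 + μ ^ 2 * ‖ξ‖ ^ 2 / 4 ≤ E := by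
      rw [hEdef]
      have := Real.add_one_le_exp (μ ^ 2 * ‖ξ‖ ^ 2 / 4)
      linarith
    rw [div_lt_div_iff₀ hE0 (by positivity)]
    have hμ2 : μ ^ 2 < 1 := by nlinarith
    nlinarith [sq_nonneg ‖ξ‖, sq_nonneg μ, mul_le_mul_of_nonneg_left hE2 (show (0:ℝ) ≤ 8 by norm_num), mul_nonneg (sq_nonneg μ) (sq_nonneg ‖ξ‖)]
  -- rewrite RHS
  have hP : (α2 + ν) * (8 + 4 * Real.sqrt n * S / Real.sqrt (α2 * ν)) = 8 * (1 + c) * (α2 + ν) := by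
    rw [hcdef]; field_simp; ring
  have hQ : 8 / t0 + 4 * Real.sqrt n * S / (t0 * Real.sqrt (α2 * ν)) = 8 * (1 + c) * (1 / t0) := by
    rw [hcdef]; field_simp; ring
  have hRHS : max ((α2 + ν) * (8 + 4 * Real.sqrt n * S / Real.sqrt (α2 * ν)))
      (8 / t0 + 4 * Real.sqrt n * S / (t0 * Real.sqrt (α2 * ν))) = 8 * (1 + c) * M := by
    rw [hP, hQ, hMdef]
    rcases le_total (α2 + ν) (1 / t0) with h | h
    · rw [max_eq_right h, max_eq_right (by nlinarith : 8 * (1 + c) * (α2 + ν) ≤ 8 * (1 + c) * (1 / t0))]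
    · rw [max_eq_left h, max_eq_left (by nlinarith : 8 * (1 + c) * (1 / t0) ≤ 8 * (1 + c) * (α2 + ν))]
  rw [hRHS]
  -- main chain
  have hLHS : ‖(z / (1 - Complex.exp (-(z * (t0 : ℝ))))) / ((E : ℝ) : ℂ)‖
      = ‖z‖ / ‖1 - Complex.exp (-(z * (t0 : ℝ)))‖ / E := by
    rw [norm_div, norm_div, Complex.norm_real, Real.norm_of_nonneg hE0.le]
  rw [hLHS]
  calc ‖z‖ / ‖1 - Complex.exp (-(z * (t0 : ℝ)))‖ / E
      ≤ a * (1 + c) / d / E := by gcongr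
    _ = a / d * (1 + c) / E := by ring
    _ ≤ (1 / t0 + a) * (1 + c) / E := by gcongr
    _ ≤ M * (2 + ‖ξ‖ ^ 2) * (1 + c) / E := by gcongr
    _ = (M * (1 + c)) * ((2 + ‖ξ‖ ^ 2) / E) := by ring
    _ < (M * (1 + c)) * (8 / μ ^ 2) := by
        exact mul_lt_mul_of_pos_left h6 (by positivity)
    _ = 8 * (1 + c) * M / μ ^ 2 := by ring
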